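/- Let b : U → ℝ be smooth with b(p) ≠ 0 and b(p) ≠ 1 for every p ∈ U. Consider the Samuelson system for smooth functions σ₁, σ₂, τ₁ : U → ℝ: (E1) f_x·∂σ₁/∂y + f_{xy} = 0; (E2) f_y·∂σ₂/∂x + f_{xy} = 0; (E3) f_y·∂τ₁/∂x − f_x·∂τ₁/∂y = 0; (E4) b·f_y·∂σ₁/∂x + (b−1)·f_x·∂τ₁/∂y + f_x·∂σ₂/∂y + 2b·f_{xy} + b_x·f_y = 0. Then the solutions of the associated homogeneous system (obtained by replacing (E1), (E2), (E4) with f_x·∂σ₁/∂y = 0, f_y·∂σ₂/∂x = 0, and b·f_y·∂σ₁/∂x + (b−1)·f_x·∂τ₁/∂y + f_x·∂σ₂/∂y = 0) form a real vector space of dimension at most 6; consequently the solution set of (E1)–(E4), if nonempty, is an affine subspace of C^∞(U)³ of dimension at most 6 (i.e., the rank of the Samuelson web does not exceed 6). -/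

import Mathlib

open Set

/-- Partial derivative with respect to the first variable. -/
noncomputable def pdx (g : ℝ × ℝ → ℝ) (p : ℝ × ℝ) : ℝ :=
  deriv (fun x => g (x, p.2)) p.1

/-- Partial derivative with respect to the second variable. -/
noncomputable def pdy (g : ℝ × ℝ → ℝ) (p : ℝ × ℝ) : ℝ :=
  deriv (fun y => g (p.1, y)) p.2

/-- The web function `H = f_{xy} / (f_x f_y)`. -/
noncomputable def Hf (f : ℝ × ℝ → ℝ) (p : ℝ × ℝ) : ℝ :=
  pdy (pdx f) p / (pdx f p * pdy f p)

section Aux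
variable {Ω : Set (ℝ × ℝ)} {g : ℝ × ℝ → ℝ}

lemma one_le_top' : ((⊤:ℕ∞) : WithTop ℕ∞) ≠ 0 := by
  simp

lemma slice_x_hasDerivAt (hΩ : IsOpen Ω) (hg : ContDiffOn ℝ (⊤:ℕ∞) g Ω)
    {p : ℝ × ℝ} (hp : p ∈ Ω) :
    HasDerivAt (fun x => g (x, p.2)) (pdx g p) p.1 := by
  have hga : ContDiffAt ℝ (⊤:ℕ∞) g p := hg.contDiffAt (hΩ.mem_nhds hp)
  have hd : DifferentiableAt ℝ (fun x : ℝ => g (x, p.2)) p.1 := by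
    have h1 : DifferentiableAt ℝ (fun x : ℝ => ((x, p.2) : ℝ × ℝ)) p.1 :=
      differentiableAt_id.prodMk (differentiableAt_const _)
    have h2 : DifferentiableAt ℝ g p := hga.differentiableAt one_le_top'
    simpa [Function.comp_def] using h2.comp p.1 (by simpa using h1)
  exact hd.hasDerivAt

lemma slice_y_hasDerivAt (hΩ : IsOpen Ω) (hg : ContDiffOn ℝ (⊤:ℕ∞) g Ω)
    {p : ℝ × ℝ} (hp : p ∈ Ω) :
    HasDerivAt (fun y => g (p.1, y)) (pdy g p) p.2 := by
  have hga : ContDiffAt ℝ (⊤:ℕ∞) g p := hg.contDiffAt (hΩ.mem_nhds hp)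
  have hd : DifferentiableAt ℝ (fun y : ℝ => g (p.1, y)) p.2 := by
    have h1 : DifferentiableAt ℝ (fun y : ℝ => ((p.1, y) : ℝ × ℝ)) p.2 :=
      (differentiableAt_const _).prodMk differentiableAt_id
    have h2 : DifferentiableAt ℝ g p := hga.differentiableAt one_le_top'
    simpa [Function.comp_def] using h2.comp p.2 (by simpa using h1)
  exact hd.hasDerivAt

lemma pdx_eq_fderiv (hΩ : IsOpen Ω) (hg : ContDiffOn ℝ (⊤:ℕ∞) g Ω)
    {p : ℝ × ℝ} (hp : p ∈ Ω) :
    pdx g p = fderiv ℝ g p (1, 0) := by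
  have h2 : DifferentiableAt ℝ g p :=
    (hg.contDiffAt (hΩ.mem_nhds hp)).differentiableAt one_le_top'
  have h1 : HasDerivAt (fun x : ℝ => ((x, p.2) : ℝ × ℝ)) ((1:ℝ), (0:ℝ)) p.1 :=
    (hasDerivAt_id p.1).prodMk (hasDerivAt_const p.1 p.2)
  have := h2.hasFDerivAt.comp_hasDerivAt (l := g) p.1 (by simpa using h1)
  exact this.deriv.symm ▸ rfl

lemma pdy_eq_fderiv (hΩ : IsOpen Ω) (hg : ContDiffOn ℝ (⊤:ℕ∞) g Ω)
    {p : ℝ × ℝ} (hp : p ∈ Ω) :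
    pdy g p = fderiv ℝ g p (0, 1) := by
  have h2 : DifferentiableAt ℝ g p :=
    (hg.contDiffAt (hΩ.mem_nhds hp)).differentiableAt one_le_top'
  have h1 : HasDerivAt (fun y : ℝ => ((p.1, y) : ℝ × ℝ)) ((0:ℝ), (1:ℝ)) p.2 :=
    (hasDerivAt_const p.2 p.1).prodMk (hasDerivAt_id p.2)
  have := h2.hasFDerivAt.comp_hasDerivAt (l := g) p.2 (by simpa using h1)
  exact this.deriv.symm ▸ rfl

lemma pdx_contDiffOn (hΩ : IsOpen Ω) (hg : ContDiffOn ℝ (⊤:ℕ∞) g Ω) :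
    ContDiffOn ℝ (⊤:ℕ∞) (pdx g) Ω := by
  have hf' : ContDiffOn ℝ (⊤:ℕ∞) (fderiv ℝ g) Ω := hg.fderiv_of_isOpen hΩ (by norm_cast)
  have h2 : ContDiffOn ℝ (⊤:ℕ∞) (fun q => fderiv ℝ g q ((1:ℝ), (0:ℝ))) Ω :=
    (ContinuousLinearMap.apply ℝ ℝ ((1:ℝ), (0:ℝ))).contDiff.comp_contDiffOn hf'
  exact h2.congr fun q hq => pdx_eq_fderiv hΩ hg hq

lemma pdy_contDiffOn (hΩ : IsOpen Ω) (hg : ContDiffOn ℝ (⊤:ℕ∞) g Ω) :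
    ContDiffOn ℝ (⊤:ℕ∞) (pdy g) Ω := by
  have hf' : ContDiffOn ℝ (⊤:ℕ∞) (fderiv ℝ g) Ω := hg.fderiv_of_isOpen hΩ (by norm_cast)
  have h2 : ContDiffOn ℝ (⊤:ℕ∞) (fun q => fderiv ℝ g q ((0:ℝ), (1:ℝ))) Ω :=
    (ContinuousLinearMap.apply ℝ ℝ ((0:ℝ), (1:ℝ))).contDiff.comp_contDiffOn hf'
  exact h2.congr fun q hq => pdy_eq_fderiv hΩ hg hq

lemma pdy_pdx_symm (hΩ : IsOpen Ω) (hg : ContDiffOn ℝ (⊤:ℕ∞) g Ω)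
    {p : ℝ × ℝ} (hp : p ∈ Ω) :
    pdy (pdx g) p = pdx (pdy g) p := by
  set f' := fderiv ℝ g with hf'def
  set f'' := fderiv ℝ f' p with hf''def
  have hUn : Ω ∈ nhds p := hΩ.mem_nhds hp
  have hev : ∀ᶠ q in nhds p, HasFDerivAt g (f' q) q := by
    filter_upwards [hΩ.eventually_mem hp] with q hq
    exact ((hg.contDiffAt (hΩ.mem_nhds hq)).differentiableAt one_le_top').hasFDerivAt
  have hf'' : HasFDerivAt f' f'' p := by
    have h1 : ContDiffAt ℝ ((⊤:ℕ∞) : WithTop ℕ∞) f' p :=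
      (hg.contDiffAt hUn).fderiv_right (by norm_cast)
    exact (h1.differentiableAt one_le_top').hasFDerivAt
  have hsymm := second_derivative_symmetric_of_eventually hev hf''
  have hx : pdy (pdx g) p = f'' (0, 1) (1, 0) := by
    have hcy : HasDerivAt (fun y : ℝ => ((p.1, y) : ℝ × ℝ)) ((0:ℝ), (1:ℝ)) p.2 :=
      (hasDerivAt_const p.2 p.1).prodMk (hasDerivAt_id p.2)
    have h1 : HasDerivAt (fun y : ℝ => f' (p.1, y)) (f'' (0, 1)) p.2 := by
      simpa [Function.comp_def] using hf''.comp_hasDerivAt (l := f') p.2 (by simpa using hcy)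
    have h2 : HasDerivAt (fun y : ℝ => f' (p.1, y) ((1:ℝ), (0:ℝ))) (f'' (0, 1) (1, 0)) p.2 := by
      simpa [Function.comp_def] using
        ((ContinuousLinearMap.apply ℝ ℝ ((1:ℝ), (0:ℝ))).hasFDerivAt).comp_hasDerivAt p.2 h1
    have hevy : (fun y => pdx g (p.1, y)) =ᶠ[nhds p.2] fun y => f' (p.1, y) ((1:ℝ), (0:ℝ)) := by
      have hc : ContinuousAt (fun y : ℝ => ((p.1, y) : ℝ × ℝ)) p.2 :=
        (continuous_const.prodMk continuous_id).continuousAt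
      filter_upwards [hc.eventually_mem (by simpa using hUn)] with y hy
      exact pdx_eq_fderiv hΩ hg hy
    have : pdy (pdx g) p = deriv (fun y : ℝ => f' (p.1, y) ((1:ℝ), (0:ℝ))) p.2 :=
      hevy.deriv_eq
    rw [this, h2.deriv]
  have hy' : pdx (pdy g) p = f'' (1, 0) (0, 1) := by
    have hcx : HasDerivAt (fun x : ℝ => ((x, p.2) : ℝ × ℝ)) ((1:ℝ), (0:ℝ)) p.1 :=
      (hasDerivAt_id p.1).prodMk (hasDerivAt_const p.1 p.2)
    have h1 : HasDerivAt (fun x : ℝ => f' (x, p.2)) (f'' (1, 0)) p.1 := by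
      simpa [Function.comp_def] using hf''.comp_hasDerivAt (l := f') p.1 (by simpa using hcx)
    have h2 : HasDerivAt (fun x : ℝ => f' (x, p.2) ((0:ℝ), (1:ℝ))) (f'' (1, 0) (0, 1)) p.1 := by
      simpa [Function.comp_def] using
        ((ContinuousLinearMap.apply ℝ ℝ ((0:ℝ), (1:ℝ))).hasFDerivAt).comp_hasDerivAt p.1 h1
    have hevx : (fun x => pdy g (x, p.2)) =ᶠ[nhds p.1] fun x => f' (x, p.2) ((0:ℝ), (1:ℝ)) := by
      have hc : ContinuousAt (fun x : ℝ => ((x, p.2) : ℝ × ℝ)) p.1 :=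
        (continuous_id.prodMk continuous_const).continuousAt
      filter_upwards [hc.eventually_mem (by simpa using hUn)] with x hx'
      exact pdy_eq_fderiv hΩ hg hx'
    have : pdx (pdy g) p = deriv (fun x : ℝ => f' (x, p.2) ((0:ℝ), (1:ℝ))) p.1 :=
      hevx.deriv_eq
    rw [this, h2.deriv]
  rw [hx, hy', hsymm (0,1) (1,0)]
end Aux


section B
lemma const_of_hasDerivAt_zero {K : Set ℝ} (hK : IsOpen K) (hKc : Convex ℝ K)
    {h : ℝ → ℝ} (hd : ∀ x ∈ K, HasDerivAt h 0 x) {a c : ℝ} (ha : a ∈ K) (hc : c ∈ K) :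
    h a = h c := by
  apply hKc.is_const_of_fderivWithin_eq_zero (𝕜 := ℝ)
    (fun x hx => ((hd x hx).differentiableAt).differentiableWithinAt) _ ha hc
  intro x hx
  rw [fderivWithin_of_isOpen hK hx, ((hd x hx).hasFDerivAt).fderiv]
  ext v
  simp

lemma ode_zero {K : Set ℝ} (hK : IsOpen K) (hKc : Convex ℝ K) {α u : ℝ → ℝ}
    (hα : ContinuousOn α K) (hu : ∀ x ∈ K, HasDerivAt u (α x * u x) x)
    {x₀ : ℝ} (hx₀ : x₀ ∈ K) (h0 : u x₀ = 0) : ∀ x ∈ K, u x = 0 := by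
  set A : ℝ → ℝ := fun x => ∫ t in x₀..x, α t with hAdef
  have hA : ∀ x ∈ K, HasDerivAt A (α x) x := by
    intro x hx
    apply intervalIntegral.integral_hasDerivAt_right
    · exact (hα.mono (hKc.ordConnected.uIcc_subset hx₀ hx)).intervalIntegrable
    · exact ContinuousAt.stronglyMeasurableAtFilter hK
        (fun y hy => hα.continuousAt (hK.mem_nhds hy)) x hx
    · exact hα.continuousAt (hK.mem_nhds hx)
  set g : ℝ → ℝ := fun x => u x * Real.exp (-A x) with hgdef
  have hg : ∀ x ∈ K, HasDerivAt g 0 x := by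
    intro x hx
    have h1 : HasDerivAt (fun x => Real.exp (-A x)) (Real.exp (-A x) * (-α x)) x :=
      ((hA x hx).neg).exp
    have := (hu x hx).mul h1
    convert this using 1
    all_goals first | rfl | ring
  intro x hx
  have := const_of_hasDerivAt_zero hK hKc hg hx hx₀
  have hgx : g x = 0 := by rw [this, hgdef]; simp [h0]
  have : u x * Real.exp (-A x) = 0 := hgx
  have hexp : Real.exp (-A x) ≠ 0 := Real.exp_ne_zero _
  exact (mul_eq_zero.mp this).resolve_right hexp
end B

section C
variable {Ω : Set (ℝ × ℝ)}

lemma evx_mem (hΩ : IsOpen Ω) {p : ℝ × ℝ} (hp : p ∈ Ω) :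
    ∀ᶠ x in nhds p.1, ((x, p.2) : ℝ × ℝ) ∈ Ω := by
  have hc : ContinuousAt (fun x : ℝ => ((x, p.2) : ℝ × ℝ)) p.1 :=
    (continuous_id.prodMk continuous_const).continuousAt
  exact hc.eventually_mem (by simpa using hΩ.mem_nhds hp)

lemma evy_mem (hΩ : IsOpen Ω) {p : ℝ × ℝ} (hp : p ∈ Ω) :
    ∀ᶠ y in nhds p.2, ((p.1, y) : ℝ × ℝ) ∈ Ω := by
  have hc : ContinuousAt (fun y : ℝ => ((p.1, y) : ℝ × ℝ)) p.2 :=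
    (continuous_const.prodMk continuous_id).continuousAt
  exact hc.eventually_mem (by simpa using hΩ.mem_nhds hp)

lemma pdx_zeroOn (hΩ : IsOpen Ω) {g : ℝ × ℝ → ℝ} (h0 : ∀ q ∈ Ω, g q = 0)
    {p : ℝ × ℝ} (hp : p ∈ Ω) : pdx g p = 0 := by
  have hev : (fun x => g (x, p.2)) =ᶠ[nhds p.1] (fun _ => (0:ℝ)) := by
    filter_upwards [evx_mem hΩ hp] with x hx
    exact h0 _ hx
  show deriv (fun x => g (x, p.2)) p.1 = 0
  rw [hev.deriv_eq]; exact deriv_const _ _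

lemma pdy_zeroOn (hΩ : IsOpen Ω) {g : ℝ × ℝ → ℝ} (h0 : ∀ q ∈ Ω, g q = 0)
    {p : ℝ × ℝ} (hp : p ∈ Ω) : pdy g p = 0 := by
  have hev : (fun y => g (p.1, y)) =ᶠ[nhds p.2] (fun _ => (0:ℝ)) := by
    filter_upwards [evy_mem hΩ hp] with y hy
    exact h0 _ hy
  show deriv (fun y => g (p.1, y)) p.2 = 0
  rw [hev.deriv_eq]; exact deriv_const _ _
end C

section C2
variable {Ω : Set (ℝ × ℝ)} {g h : ℝ × ℝ → ℝ}

lemma pdx_congrOn (hΩ : IsOpen Ω) (hgh : ∀ q ∈ Ω, g q = h q) {p : ℝ × ℝ} (hp : p ∈ Ω) :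
    pdx g p = pdx h p := by
  apply Filter.EventuallyEq.deriv_eq
  filter_upwards [evx_mem hΩ hp] with t ht
  exact hgh _ ht

lemma pdy_congrOn (hΩ : IsOpen Ω) (hgh : ∀ q ∈ Ω, g q = h q) {p : ℝ × ℝ} (hp : p ∈ Ω) :
    pdy g p = pdy h p := by
  apply Filter.EventuallyEq.deriv_eq
  filter_upwards [evy_mem hΩ hp] with t ht
  exact hgh _ ht

lemma pdx_add (hΩ : IsOpen Ω) (hg : ContDiffOn ℝ (⊤:ℕ∞) g Ω) (hh : ContDiffOn ℝ (⊤:ℕ∞) h Ω)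
    {p : ℝ × ℝ} (hp : p ∈ Ω) :
    pdx (fun q => g q + h q) p = pdx g p + pdx h p :=
  ((slice_x_hasDerivAt hΩ hg hp).add (slice_x_hasDerivAt hΩ hh hp)).deriv

lemma pdy_add (hΩ : IsOpen Ω) (hg : ContDiffOn ℝ (⊤:ℕ∞) g Ω) (hh : ContDiffOn ℝ (⊤:ℕ∞) h Ω)
    {p : ℝ × ℝ} (hp : p ∈ Ω) :
    pdy (fun q => g q + h q) p = pdy g p + pdy h p :=
  ((slice_y_hasDerivAt hΩ hg hp).add (slice_y_hasDerivAt hΩ hh hp)).deriv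

lemma pdx_sub (hΩ : IsOpen Ω) (hg : ContDiffOn ℝ (⊤:ℕ∞) g Ω) (hh : ContDiffOn ℝ (⊤:ℕ∞) h Ω)
    {p : ℝ × ℝ} (hp : p ∈ Ω) :
    pdx (fun q => g q - h q) p = pdx g p - pdx h p :=
  ((slice_x_hasDerivAt hΩ hg hp).sub (slice_x_hasDerivAt hΩ hh hp)).deriv

lemma pdy_sub (hΩ : IsOpen Ω) (hg : ContDiffOn ℝ (⊤:ℕ∞) g Ω) (hh : ContDiffOn ℝ (⊤:ℕ∞) h Ω)
    {p : ℝ × ℝ} (hp : p ∈ Ω) :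
    pdy (fun q => g q - h q) p = pdy g p - pdy h p :=
  ((slice_y_hasDerivAt hΩ hg hp).sub (slice_y_hasDerivAt hΩ hh hp)).deriv

lemma pdx_const_mul (hΩ : IsOpen Ω) (hg : ContDiffOn ℝ (⊤:ℕ∞) g Ω) (c : ℝ)
    {p : ℝ × ℝ} (hp : p ∈ Ω) :
    pdx (fun q => c * g q) p = c * pdx g p :=
  ((slice_x_hasDerivAt hΩ hg hp).const_mul c).deriv

lemma pdy_const_mul (hΩ : IsOpen Ω) (hg : ContDiffOn ℝ (⊤:ℕ∞) g Ω) (c : ℝ)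
    {p : ℝ × ℝ} (hp : p ∈ Ω) :
    pdy (fun q => c * g q) p = c * pdy g p :=
  ((slice_y_hasDerivAt hΩ hg hp).const_mul c).deriv

lemma pdy_pdy_add (hΩ : IsOpen Ω) (hg : ContDiffOn ℝ (⊤:ℕ∞) g Ω)
    (hh : ContDiffOn ℝ (⊤:ℕ∞) h Ω) {p : ℝ × ℝ} (hp : p ∈ Ω) :
    pdy (pdy (fun q => g q + h q)) p = pdy (pdy g) p + pdy (pdy h) p := by
  have h1 : ∀ q ∈ Ω, pdy (fun q => g q + h q) q = (fun q => pdy g q + pdy h q) q :=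
    fun q hq => pdy_add hΩ hg hh hq
  calc pdy (pdy (fun q => g q + h q)) p = pdy (fun q => pdy g q + pdy h q) p :=
        pdy_congrOn hΩ h1 hp
    _ = pdy (pdy g) p + pdy (pdy h) p :=
        pdy_add hΩ (pdy_contDiffOn hΩ hg) (pdy_contDiffOn hΩ hh) hp

lemma pdy_pdy_const_mul (hΩ : IsOpen Ω) (hg : ContDiffOn ℝ (⊤:ℕ∞) g Ω) (c : ℝ)
    {p : ℝ × ℝ} (hp : p ∈ Ω) :
    pdy (pdy (fun q => c * g q)) p = c * pdy (pdy g) p := by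
  have h1 : ∀ q ∈ Ω, pdy (fun q => c * g q) q = (fun q => c * pdy g q) q :=
    fun q hq => pdy_const_mul hΩ hg c hq
  calc pdy (pdy (fun q => c * g q)) p = pdy (fun q => c * pdy g q) p :=
        pdy_congrOn hΩ h1 hp
    _ = c * pdy (pdy g) p := pdy_const_mul hΩ (pdy_contDiffOn hΩ hg) c hp

lemma pdy_pdy_congrOn (hΩ : IsOpen Ω) (hgh : ∀ q ∈ Ω, g q = h q) {p : ℝ × ℝ} (hp : p ∈ Ω) :
    pdy (pdy g) p = pdy (pdy h) p := by
  have h1 : ∀ q ∈ Ω, pdy g q = pdy h q := fun q hq => pdy_congrOn hΩ hgh hq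
  exact pdy_congrOn hΩ h1 hp
end C2


lemma stage_horizontal {b1 F1 F2 By Bx F11 F12y F21 F22 u ux Q Qy Qx P Qb Pb Qyb Qxb av : ℝ}
    (hb1' : b1 - 1 ≠ 0) (hF1 : F1 ≠ 0) (hF2 : F2 ≠ 0) (hbne : b1 ≠ 0)
    (hA : b1 * F2 * u + (b1 - 1) * F1 * Q = 0)
    (hB : F2 * P - F1 * Q = 0)
    (hC : (By * F2 + b1 * F22) * u + (By * F1 + (b1 - 1) * F12y) * Q + (b1 - 1) * F1 * Qy = 0)
    (hD : F22 * P + F2 * Qx - F12y * Q - F1 * Qy = 0)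
    (hE : (Bx * F2 + b1 * F21) * u + b1 * F2 * ux + (Bx * F1 + (b1 - 1) * F11) * Q
      + (b1 - 1) * F1 * Qx = 0)
    (hQb : Qb = -(b1 * F2) / ((b1 - 1) * F1))
    (hPb : Pb = F1 * Qb / F2)
    (hQyb : Qyb = -((By * F2 + b1 * F22) + (By * F1 + (b1 - 1) * F12y) * Qb) / ((b1 - 1) * F1))
    (hQxb : Qxb = (F12y * Qb + F1 * Qyb - F22 * Pb) / F2)
    (hav : av = -((Bx * F2 + b1 * F21) + (Bx * F1 + (b1 - 1) * F11) * Qb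
      + (b1 - 1) * F1 * Qxb) / (b1 * F2)) :
    ux = av * u := by
  have hQv : Q = Qb * u := by
    rw [hQb]; field_simp; linear_combination hA
  have hPv : P = Pb * u := by
    have h : P = F1 * Q / F2 := by field_simp; linear_combination hB
    rw [h, hQv, hPb]; ring
  have hQyv : Qy = Qyb * u := by
    have h : Qy = -((By * F2 + b1 * F22) * u + (By * F1 + (b1 - 1) * F12y) * Q)
        / ((b1 - 1) * F1) := by field_simp; linear_combination hC
    rw [h, hQv, hQyb]; ring
  have hQxv : Qx = Qxb * u := by
    have h : Qx = (F12y * Q + F1 * Qy - F22 * P) / F2 := by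
      field_simp; linear_combination hD
    rw [h, hQv, hQyv, hPv, hQxb]; ring
  have h : ux = -((Bx * F2 + b1 * F21) * u + (Bx * F1 + (b1 - 1) * F11) * Q
      + (b1 - 1) * F1 * Qx) / (b1 * F2) := by
    field_simp; linear_combination hE
  rw [h, hQv, hQxv, hav]; ring

lemma stage_vertical {b1 F1 F2 By Bx F11 F12y F22 v vy Q Qy Qx P Qh Ph Qyh Qxh bv : ℝ}
    (hb1' : b1 - 1 ≠ 0) (hF1 : F1 ≠ 0) (hF2 : F2 ≠ 0)
    (hA : (b1 - 1) * F1 * Q + F1 * v = 0)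
    (hB : F2 * P - F1 * Q = 0)
    (hC : (By * F1 + (b1 - 1) * F12y) * Q + (b1 - 1) * F1 * Qy + F12y * v + F1 * vy = 0)
    (hD : F22 * P + F2 * Qx - F12y * Q - F1 * Qy = 0)
    (hE : (Bx * F1 + (b1 - 1) * F11) * Q + (b1 - 1) * F1 * Qx + F11 * v = 0)
    (hQh : Qh = -1 / (b1 - 1))
    (hPh : Ph = F1 * Qh / F2)
    (hQxh : Qxh = -((Bx * F1 + (b1 - 1) * F11) * Qh + F11) / ((b1 - 1) * F1))
    (hQyh : Qyh = (F22 * Ph + F2 * Qxh - F12y * Qh) / F1)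
    (hbv : bv = -((By * F1 + (b1 - 1) * F12y) * Qh + (b1 - 1) * F1 * Qyh + F12y) / F1) :
    vy = bv * v := by
  have hA' : (b1 - 1) * Q + v = 0 := by
    have h2 : F1 * ((b1 - 1) * Q + v) = 0 := by linear_combination hA
    exact (mul_eq_zero.mp h2).resolve_left hF1
  have hQv : Q = Qh * v := by
    rw [hQh]; field_simp; linear_combination hA'
  have hPv : P = Ph * v := by
    have h : P = F1 * Q / F2 := by field_simp; linear_combination hB
    rw [h, hQv, hPh]; ring
  have hQxv : Qx = Qxh * v := by
    have h : Qx = -((Bx * F1 + (b1 - 1) * F11) * Q + F11 * v) / ((b1 - 1) * F1) := by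
      field_simp; linear_combination hE
    rw [h, hQv, hQxh]; ring
  have hQyv : Qy = Qyh * v := by
    have h : Qy = (F22 * P + F2 * Qx - F12y * Q) / F1 := by
      field_simp; linear_combination -hD
    rw [h, hQv, hQxv, hPv, hQyh]; ring
  have h : vy = -((By * F1 + (b1 - 1) * F12y) * Q + (b1 - 1) * F1 * Qy + F12y * v) / F1 := by
    field_simp; linear_combination hC
  rw [h, hQv, hQyv, hbv]; ring

lemma samuelson_unique
    (I J : Set ℝ) (hI : IsOpen I) (hJ : IsOpen J)
    (hIc : I.OrdConnected) (hJc : J.OrdConnected)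
    (f : ℝ × ℝ → ℝ) (hf : ContDiffOn ℝ (⊤ : ℕ∞) f (I ×ˢ J))
    (hfx : ∀ p ∈ I ×ˢ J, pdx f p ≠ 0) (hfy : ∀ p ∈ I ×ˢ J, pdy f p ≠ 0)
    (b : ℝ × ℝ → ℝ) (hb : ContDiffOn ℝ (⊤ : ℕ∞) b (I ×ˢ J))
    (hb0 : ∀ p ∈ I ×ˢ J, b p ≠ 0) (hb1 : ∀ p ∈ I ×ˢ J, b p ≠ 1)
    {x₀ y₀ : ℝ} (hx₀ : x₀ ∈ I) (hy₀ : y₀ ∈ J)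
    (σ₁ σ₂ τ₁ : ℝ × ℝ → ℝ)
    (h₁ : ContDiffOn ℝ (⊤ : ℕ∞) σ₁ (I ×ˢ J))
    (h₂ : ContDiffOn ℝ (⊤ : ℕ∞) σ₂ (I ×ˢ J))
    (h₃ : ContDiffOn ℝ (⊤ : ℕ∞) τ₁ (I ×ˢ J))
    (heq : ∀ p ∈ I ×ˢ J,
        pdx f p * pdy σ₁ p = 0 ∧
        pdy f p * pdx σ₂ p = 0 ∧
        pdy f p * pdx τ₁ p - pdx f p * pdy τ₁ p = 0 ∧
        b p * pdy f p * pdx σ₁ p + (b p - 1) * pdx f p * pdy τ₁ p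
          + pdx f p * pdy σ₂ p = 0)
    (j1 : σ₁ (x₀, y₀) = 0) (j2 : σ₂ (x₀, y₀) = 0) (j3 : τ₁ (x₀, y₀) = 0)
    (j4 : pdx σ₁ (x₀, y₀) = 0) (j5 : pdy σ₂ (x₀, y₀) = 0)
    (j6 : pdy (pdy σ₂) (x₀, y₀) = 0) :
    ∀ p ∈ I ×ˢ J, σ₁ p = 0 ∧ σ₂ p = 0 ∧ τ₁ p = 0 := by
  have hU : IsOpen (I ×ˢ J) := hI.prod hJ
  -- first two equations give vanishing of pdy σ₁ and pdx σ₂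
  have h1y : ∀ p ∈ I ×ˢ J, pdy σ₁ p = 0 := fun p hp =>
    (mul_eq_zero.mp (heq p hp).1).resolve_left (hfx p hp)
  have h2x : ∀ p ∈ I ×ˢ J, pdx σ₂ p = 0 := fun p hp =>
    (mul_eq_zero.mp (heq p hp).2.1).resolve_left (hfy p hp)
  -- σ₁ is independent of y, σ₂ is independent of x
  have hσ1i : ∀ x ∈ I, ∀ y ∈ J, ∀ y' ∈ J, σ₁ (x, y) = σ₁ (x, y') := by
    intro x hx y hy y' hy'
    refine const_of_hasDerivAt_zero hJ hJc.convex (h := fun t => σ₁ (x, t)) ?_ hy hy'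
    intro t ht
    have hs := slice_y_hasDerivAt hU h₁ (p := (x, t)) ⟨hx, ht⟩
    rw [h1y (x, t) ⟨hx, ht⟩] at hs
    exact hs
  have hσ2i : ∀ y ∈ J, ∀ x ∈ I, ∀ x' ∈ I, σ₂ (x, y) = σ₂ (x', y) := by
    intro y hy x hx x' hx'
    refine const_of_hasDerivAt_zero hI hIc.convex (h := fun t => σ₂ (t, y)) ?_ hx hx'
    intro t ht
    have hs := slice_x_hasDerivAt hU h₂ (p := (t, y)) ⟨ht, hy⟩
    rw [h2x (t, y) ⟨ht, hy⟩] at hs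
    exact hs
  -- pdx σ₁ is independent of y
  have hui : ∀ x ∈ I, ∀ y ∈ J, pdx σ₁ (x, y) = pdx σ₁ (x, y₀) := by
    intro x hx y hy
    show deriv (fun t => σ₁ (t, y)) x = deriv (fun t => σ₁ (t, y₀)) x
    apply Filter.EventuallyEq.deriv_eq
    filter_upwards [hI.eventually_mem hx] with t ht
    exact hσ1i t ht y hy y₀ hy₀
  -- pdy σ₂ and pdy (pdy σ₂) are independent of x
  have hvyi : ∀ x ∈ I, ∀ y ∈ J, pdy σ₂ (x, y) = pdy σ₂ (x₀, y) := by
    intro x hx y hy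
    show deriv (fun t => σ₂ (x, t)) y = deriv (fun t => σ₂ (x₀, t)) y
    apply Filter.EventuallyEq.deriv_eq
    filter_upwards [hJ.eventually_mem hy] with t ht
    exact hσ2i t ht x hx x₀ hx₀
  have hvyyi : ∀ x ∈ I, ∀ y ∈ J, pdy (pdy σ₂) (x, y) = pdy (pdy σ₂) (x₀, y) := by
    intro x hx y hy
    show deriv (fun t => pdy σ₂ (x, t)) y = deriv (fun t => pdy σ₂ (x₀, t)) y
    apply Filter.EventuallyEq.deriv_eq
    filter_upwards [hJ.eventually_mem hy] with t ht
    exact hvyi x hx t ht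
  -- mixed second derivatives of σ₁, σ₂ vanish
  have uy0 : ∀ p ∈ I ×ˢ J, pdy (pdx σ₁) p = 0 := by
    intro p hp
    have hev : (fun t => pdx σ₁ (p.1, t)) =ᶠ[nhds p.2] (fun _ => pdx σ₁ (p.1, y₀)) := by
      filter_upwards [hJ.eventually_mem hp.2] with t ht
      exact hui p.1 hp.1 t ht
    show deriv (fun t => pdx σ₁ (p.1, t)) p.2 = 0
    rw [hev.deriv_eq]; exact deriv_const _ _
  have vx0 : ∀ p ∈ I ×ˢ J, pdx (pdy σ₂) p = 0 := by
    intro p hp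
    have hev : (fun t => pdy σ₂ (t, p.2)) =ᶠ[nhds p.1] (fun _ => pdy σ₂ (x₀, p.2)) := by
      filter_upwards [hI.eventually_mem hp.1] with t ht
      exact hvyi t ht p.2 hp.2
    show deriv (fun t => pdy σ₂ (t, p.2)) p.1 = 0
    rw [hev.deriv_eq]; exact deriv_const _ _
  -- smoothness of the derived functions
  have hfx' := pdx_contDiffOn hU hf
  have hfy' := pdy_contDiffOn hU hf
  have hu' := pdx_contDiffOn hU h₁
  have hv' := pdy_contDiffOn hU h₂
  have hP' := pdx_contDiffOn hU h₃
  have hQ' := pdy_contDiffOn hU h₃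
  have hb' := hb
  -- differentiated identity in the x direction (e5)
  have e5 : ∀ p ∈ I ×ˢ J,
      (pdx b p * pdy f p + b p * pdx (pdy f) p) * pdx σ₁ p
        + b p * pdy f p * pdx (pdx σ₁) p
        + (pdx b p * pdx f p + (b p - 1) * pdx (pdx f) p) * pdy τ₁ p
        + (b p - 1) * pdx f p * pdx (pdy τ₁) p
        + pdx (pdx f) p * pdy σ₂ p + pdx f p * pdx (pdy σ₂) p = 0 := by
    intro p hp
    have sb := slice_x_hasDerivAt hU hb hp
    have sfy := slice_x_hasDerivAt hU hfy' hp
    have sfx := slice_x_hasDerivAt hU hfx' hp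
    have su := slice_x_hasDerivAt hU hu' hp
    have sQ := slice_x_hasDerivAt hU hQ' hp
    have sv := slice_x_hasDerivAt hU hv' hp
    have hD := (((sb.mul sfy).mul su).add (((sb.sub_const 1).mul sfx).mul sQ)).add (sfx.mul sv)
    have hz : deriv (fun t => b (t, p.2) * pdy f (t, p.2) * pdx σ₁ (t, p.2)
        + (b (t, p.2) - 1) * pdx f (t, p.2) * pdy τ₁ (t, p.2)
        + pdx f (t, p.2) * pdy σ₂ (t, p.2)) p.1 = 0 := by
      have hev : (fun t => b (t, p.2) * pdy f (t, p.2) * pdx σ₁ (t, p.2)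
          + (b (t, p.2) - 1) * pdx f (t, p.2) * pdy τ₁ (t, p.2)
          + pdx f (t, p.2) * pdy σ₂ (t, p.2)) =ᶠ[nhds p.1] (fun _ => (0:ℝ)) := by
        filter_upwards [evx_mem hU hp] with t ht
        exact (heq _ ht).2.2.2
      rw [hev.deriv_eq]; exact deriv_const _ _
    have hDe := hD.deriv
    erw [hz] at hDe
    simp only [Prod.mk.eta, Pi.mul_apply] at hDe
    linear_combination -hDe
  -- differentiated identity in the y direction (e6)
  have e6 : ∀ p ∈ I ×ˢ J,
      (pdy b p * pdy f p + b p * pdy (pdy f) p) * pdx σ₁ p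
        + b p * pdy f p * pdy (pdx σ₁) p
        + (pdy b p * pdx f p + (b p - 1) * pdy (pdx f) p) * pdy τ₁ p
        + (b p - 1) * pdx f p * pdy (pdy τ₁) p
        + pdy (pdx f) p * pdy σ₂ p + pdx f p * pdy (pdy σ₂) p = 0 := by
    intro p hp
    have sb := slice_y_hasDerivAt hU hb hp
    have sfy := slice_y_hasDerivAt hU hfy' hp
    have sfx := slice_y_hasDerivAt hU hfx' hp
    have su := slice_y_hasDerivAt hU hu' hp
    have sQ := slice_y_hasDerivAt hU hQ' hp
    have sv := slice_y_hasDerivAt hU hv' hp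
    have hD := (((sb.mul sfy).mul su).add (((sb.sub_const 1).mul sfx).mul sQ)).add (sfx.mul sv)
    have hz : deriv (fun t => b (p.1, t) * pdy f (p.1, t) * pdx σ₁ (p.1, t)
        + (b (p.1, t) - 1) * pdx f (p.1, t) * pdy τ₁ (p.1, t)
        + pdx f (p.1, t) * pdy σ₂ (p.1, t)) p.2 = 0 := by
      have hev : (fun t => b (p.1, t) * pdy f (p.1, t) * pdx σ₁ (p.1, t)
          + (b (p.1, t) - 1) * pdx f (p.1, t) * pdy τ₁ (p.1, t)
          + pdx f (p.1, t) * pdy σ₂ (p.1, t)) =ᶠ[nhds p.2] (fun _ => (0:ℝ)) := by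
        filter_upwards [evy_mem hU hp] with t ht
        exact (heq _ ht).2.2.2
      rw [hev.deriv_eq]; exact deriv_const _ _
    have hDe := hD.deriv
    erw [hz] at hDe
    simp only [Prod.mk.eta, Pi.mul_apply] at hDe
    linear_combination -hDe
  -- differentiated identity of E3 in the y direction (e7)
  have e7 : ∀ p ∈ I ×ˢ J,
      pdy (pdy f) p * pdx τ₁ p + pdy f p * pdy (pdx τ₁) p
        - pdy (pdx f) p * pdy τ₁ p - pdx f p * pdy (pdy τ₁) p = 0 := by
    intro p hp
    have sfy := slice_y_hasDerivAt hU hfy' hp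
    have sfx := slice_y_hasDerivAt hU hfx' hp
    have sP := slice_y_hasDerivAt hU hP' hp
    have sQ := slice_y_hasDerivAt hU hQ' hp
    have hD := (sfy.mul sP).sub (sfx.mul sQ)
    have hz : deriv (fun t => pdy f (p.1, t) * pdx τ₁ (p.1, t)
        - pdx f (p.1, t) * pdy τ₁ (p.1, t)) p.2 = 0 := by
      have hev : (fun t => pdy f (p.1, t) * pdx τ₁ (p.1, t)
          - pdx f (p.1, t) * pdy τ₁ (p.1, t)) =ᶠ[nhds p.2] (fun _ => (0:ℝ)) := by
        filter_upwards [evy_mem hU hp] with t ht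
        exact (heq _ ht).2.2.1
      rw [hev.deriv_eq]; exact deriv_const _ _
    have hDe := hD.deriv
    erw [hz] at hDe
    simp only [Prod.mk.eta, Pi.mul_apply] at hDe
    linear_combination -hDe
  -- Schwarz symmetry for τ₁
  have hsch : ∀ p ∈ I ×ˢ J, pdy (pdx τ₁) p = pdx (pdy τ₁) p := fun p hp =>
    pdy_pdx_symm hU h₃ hp
  -- second-order smoothness
  have hfxx := pdx_contDiffOn hU hfx'
  have hfxy := pdy_contDiffOn hU hfx'
  have hfyx := pdx_contDiffOn hU hfy'
  have hfyy := pdy_contDiffOn hU hfy'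
  have hbx' := pdx_contDiffOn hU hb
  have hby' := pdy_contDiffOn hU hb
  -- continuity of slices
  have hcompI : ∀ (g : ℝ × ℝ → ℝ), ContDiffOn ℝ (⊤:ℕ∞) g (I ×ˢ J) →
      ContinuousOn (fun t => g (t, y₀)) I := by
    intro g hg
    have h := hg.continuousOn.comp
      ((continuous_id.prodMk continuous_const).continuousOn (s := I))
      (fun t ht => Set.mk_mem_prod ht hy₀)
    simpa [Function.comp_def] using h
  have hcompJ : ∀ (g : ℝ × ℝ → ℝ), ContDiffOn ℝ (⊤:ℕ∞) g (I ×ˢ J) →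
      ContinuousOn (fun t => g (x₀, t)) J := by
    intro g hg
    have h := hg.continuousOn.comp
      ((continuous_const.prodMk continuous_id).continuousOn (s := J))
      (fun t ht => Set.mk_mem_prod hx₀ ht)
    simpa [Function.comp_def] using h
  -- coefficient functions along the horizontal line
  set Qb : ℝ → ℝ := fun t => -(b (t, y₀) * pdy f (t, y₀)) /
      ((b (t, y₀) - 1) * pdx f (t, y₀)) with hQbd
  set Pb : ℝ → ℝ := fun t => pdx f (t, y₀) * Qb t / pdy f (t, y₀) with hPbd
  set Qyb : ℝ → ℝ := fun t =>
      -((pdy b (t, y₀) * pdy f (t, y₀) + b (t, y₀) * pdy (pdy f) (t, y₀))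
        + (pdy b (t, y₀) * pdx f (t, y₀) + (b (t, y₀) - 1) * pdy (pdx f) (t, y₀)) * Qb t) /
      ((b (t, y₀) - 1) * pdx f (t, y₀)) with hQybd
  set Qxb : ℝ → ℝ := fun t =>
      (pdy (pdx f) (t, y₀) * Qb t + pdx f (t, y₀) * Qyb t
        - pdy (pdy f) (t, y₀) * Pb t) / pdy f (t, y₀) with hQxbd
  set av : ℝ → ℝ := fun t =>
      -((pdx b (t, y₀) * pdy f (t, y₀) + b (t, y₀) * pdx (pdy f) (t, y₀))
        + (pdx b (t, y₀) * pdx f (t, y₀) + (b (t, y₀) - 1) * pdx (pdx f) (t, y₀)) * Qb t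
        + (b (t, y₀) - 1) * pdx f (t, y₀) * Qxb t) / (b (t, y₀) * pdy f (t, y₀)) with havd
  have key : ∀ t ∈ I, pdx (pdx σ₁) (t, y₀) = av t * pdx σ₁ (t, y₀) := by
    intro t ht
    have hp : ((t, y₀) : ℝ × ℝ) ∈ I ×ˢ J := ⟨ht, hy₀⟩
    have hv0 : pdy σ₂ (t, y₀) = 0 := (hvyi t ht y₀ hy₀).trans j5
    have hvy0 : pdy (pdy σ₂) (t, y₀) = 0 := (hvyyi t ht y₀ hy₀).trans j6
    have hvx0 : pdx (pdy σ₂) (t, y₀) = 0 := vx0 _ hp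
    have huy0 : pdy (pdx σ₁) (t, y₀) = 0 := uy0 _ hp
    refine stage_horizontal (b1 := b (t, y₀)) (F1 := pdx f (t, y₀)) (F2 := pdy f (t, y₀))
      (By := pdy b (t, y₀)) (Bx := pdx b (t, y₀)) (F11 := pdx (pdx f) (t, y₀))
      (F12y := pdy (pdx f) (t, y₀)) (F21 := pdx (pdy f) (t, y₀)) (F22 := pdy (pdy f) (t, y₀))
      (u := pdx σ₁ (t, y₀)) (ux := pdx (pdx σ₁) (t, y₀)) (Q := pdy τ₁ (t, y₀))
      (Qy := pdy (pdy τ₁) (t, y₀)) (Qx := pdx (pdy τ₁) (t, y₀)) (P := pdx τ₁ (t, y₀))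
      (Qb := Qb t) (Pb := Pb t) (Qyb := Qyb t) (Qxb := Qxb t) (av := av t)
      (sub_ne_zero.mpr (hb1 _ hp)) (hfx _ hp) (hfy _ hp) (hb0 _ hp)
      ?_ ?_ ?_ ?_ ?_ (by rw [hQbd]) (by rw [hPbd]) (by rw [hQybd]) (by rw [hQxbd]) (by rw [havd])
    · have h4 := (heq _ hp).2.2.2
      rw [hv0] at h4
      linear_combination h4
    · exact (heq _ hp).2.2.1
    · have h6 := e6 _ hp
      rw [huy0, hv0, hvy0] at h6
      linear_combination h6
    · have h7 := e7 _ hp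
      rw [hsch _ hp] at h7
      linear_combination h7
    · have h5 := e5 _ hp
      rw [hv0, hvx0] at h5
      linear_combination h5
  -- continuity of the coefficient along the horizontal line
  have hneI : ∀ t ∈ I, (b (t, y₀) - 1) * pdx f (t, y₀) ≠ 0 := fun t ht =>
    mul_ne_zero (sub_ne_zero.mpr (hb1 _ ⟨ht, hy₀⟩)) (hfx _ ⟨ht, hy₀⟩)
  have hbI := hcompI b hb
  have hfxI := hcompI _ hfx'
  have hfyI := hcompI _ hfy'
  have hQbC : ContinuousOn Qb I := by
    rw [hQbd]
    exact ((hbI.mul hfyI).neg).div ((hbI.sub continuousOn_const).mul hfxI) hneI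
  have hPbC : ContinuousOn Pb I := by
    rw [hPbd]
    exact (hfxI.mul hQbC).div hfyI (fun t ht => hfy _ ⟨ht, hy₀⟩)
  have hQybC : ContinuousOn Qyb I := by
    rw [hQybd]
    exact ((((hcompI _ hby').mul hfyI).add (hbI.mul (hcompI _ hfyy))).add
      ((((hcompI _ hby').mul hfxI).add ((hbI.sub continuousOn_const).mul
        (hcompI _ hfxy))).mul hQbC)).neg.div
      ((hbI.sub continuousOn_const).mul hfxI) hneI
  have hQxbC : ContinuousOn Qxb I := by
    rw [hQxbd]
    exact ((((hcompI _ hfxy).mul hQbC).add (hfxI.mul hQybC)).sub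
      ((hcompI _ hfyy).mul hPbC)).div hfyI (fun t ht => hfy _ ⟨ht, hy₀⟩)
  have havC : ContinuousOn av I := by
    rw [havd]
    exact (((((hcompI _ hbx').mul hfyI).add (hbI.mul (hcompI _ hfyx))).add
      ((((hcompI _ hbx').mul hfxI).add ((hbI.sub continuousOn_const).mul
        (hcompI _ hfxx))).mul hQbC)).add
      (((hbI.sub continuousOn_const).mul hfxI).mul hQxbC)).neg.div
      (hbI.mul hfyI) (fun t ht => mul_ne_zero (hb0 _ ⟨ht, hy₀⟩) (hfy _ ⟨ht, hy₀⟩))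
  -- the horizontal ODE: pdx σ₁ vanishes
  have hODE : ∀ t ∈ I, HasDerivAt (fun s => pdx σ₁ (s, y₀)) (av t * pdx σ₁ (t, y₀)) t := by
    intro t ht
    have hs := slice_x_hasDerivAt hU hu' (p := (t, y₀)) ⟨ht, hy₀⟩
    rw [key t ht] at hs
    exact hs
  have hu0I : ∀ t ∈ I, pdx σ₁ (t, y₀) = 0 := ode_zero hI hIc.convex havC hODE hx₀ j4
  have hu0 : ∀ p ∈ I ×ˢ J, pdx σ₁ p = 0 := fun p hp =>
    (hui p.1 hp.1 p.2 hp.2).trans (hu0I p.1 hp.1)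
  have hux0 : ∀ p ∈ I ×ˢ J, pdx (pdx σ₁) p = 0 := fun p hp => pdx_zeroOn hU hu0 hp
  -- coefficient functions along the vertical line
  set Qh : ℝ → ℝ := fun s => -1 / (b (x₀, s) - 1) with hQhd
  set Ph : ℝ → ℝ := fun s => pdx f (x₀, s) * Qh s / pdy f (x₀, s) with hPhd
  set Qxh : ℝ → ℝ := fun s =>
      -((pdx b (x₀, s) * pdx f (x₀, s) + (b (x₀, s) - 1) * pdx (pdx f) (x₀, s)) * Qh s
        + pdx (pdx f) (x₀, s)) / ((b (x₀, s) - 1) * pdx f (x₀, s)) with hQxhd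
  set Qyh : ℝ → ℝ := fun s =>
      (pdy (pdy f) (x₀, s) * Ph s + pdy f (x₀, s) * Qxh s
        - pdy (pdx f) (x₀, s) * Qh s) / pdx f (x₀, s) with hQyhd
  set bv : ℝ → ℝ := fun s =>
      -((pdy b (x₀, s) * pdx f (x₀, s) + (b (x₀, s) - 1) * pdy (pdx f) (x₀, s)) * Qh s
        + (b (x₀, s) - 1) * pdx f (x₀, s) * Qyh s + pdy (pdx f) (x₀, s)) /
      pdx f (x₀, s) with hbvd
  have keyv : ∀ s ∈ J, pdy (pdy σ₂) (x₀, s) = bv s * pdy σ₂ (x₀, s) := by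
    intro s hs
    have hp : ((x₀, s) : ℝ × ℝ) ∈ I ×ˢ J := ⟨hx₀, hs⟩
    have hu0' : pdx σ₁ (x₀, s) = 0 := hu0 _ hp
    have hux0' : pdx (pdx σ₁) (x₀, s) = 0 := hux0 _ hp
    have huy0' : pdy (pdx σ₁) (x₀, s) = 0 := uy0 _ hp
    have hvx0' : pdx (pdy σ₂) (x₀, s) = 0 := vx0 _ hp
    refine stage_vertical (b1 := b (x₀, s)) (F1 := pdx f (x₀, s)) (F2 := pdy f (x₀, s))
      (By := pdy b (x₀, s)) (Bx := pdx b (x₀, s)) (F11 := pdx (pdx f) (x₀, s))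
      (F12y := pdy (pdx f) (x₀, s)) (F22 := pdy (pdy f) (x₀, s))
      (v := pdy σ₂ (x₀, s)) (vy := pdy (pdy σ₂) (x₀, s)) (Q := pdy τ₁ (x₀, s))
      (Qy := pdy (pdy τ₁) (x₀, s)) (Qx := pdx (pdy τ₁) (x₀, s)) (P := pdx τ₁ (x₀, s))
      (Qh := Qh s) (Ph := Ph s) (Qyh := Qyh s) (Qxh := Qxh s) (bv := bv s)
      (sub_ne_zero.mpr (hb1 _ hp)) (hfx _ hp) (hfy _ hp)
      ?_ ?_ ?_ ?_ ?_ (by rw [hQhd]) (by rw [hPhd]) (by rw [hQxhd]) (by rw [hQyhd]) (by rw [hbvd])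
    · have h4 := (heq _ hp).2.2.2
      rw [hu0'] at h4
      linear_combination h4
    · exact (heq _ hp).2.2.1
    · have h6 := e6 _ hp
      rw [hu0', huy0'] at h6
      linear_combination h6
    · have h7 := e7 _ hp
      rw [hsch _ hp] at h7
      linear_combination h7
    · have h5 := e5 _ hp
      rw [hu0', hux0', hvx0'] at h5
      linear_combination h5
  -- continuity along the vertical line
  have hbJ := hcompJ b hb
  have hfxJ := hcompJ _ hfx'
  have hfyJ := hcompJ _ hfy'
  have hneJ1 : ∀ s ∈ J, b (x₀, s) - 1 ≠ 0 := fun s hs => sub_ne_zero.mpr (hb1 _ ⟨hx₀, hs⟩)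
  have hneJF1 : ∀ s ∈ J, pdx f (x₀, s) ≠ 0 := fun s hs => hfx _ ⟨hx₀, hs⟩
  have hQhC : ContinuousOn Qh J := by
    rw [hQhd]
    exact continuousOn_const.div (hbJ.sub continuousOn_const) hneJ1
  have hPhC : ContinuousOn Ph J := by
    rw [hPhd]
    exact (hfxJ.mul hQhC).div hfyJ (fun s hs => hfy _ ⟨hx₀, hs⟩)
  have hQxhC : ContinuousOn Qxh J := by
    rw [hQxhd]
    exact (((((hcompJ _ hbx').mul hfxJ).add ((hbJ.sub continuousOn_const).mul
      (hcompJ _ hfxx))).mul hQhC).add (hcompJ _ hfxx)).neg.div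
      ((hbJ.sub continuousOn_const).mul hfxJ)
      (fun s hs => mul_ne_zero (hneJ1 s hs) (hneJF1 s hs))
  have hQyhC : ContinuousOn Qyh J := by
    rw [hQyhd]
    exact ((((hcompJ _ hfyy).mul hPhC).add (hfyJ.mul hQxhC)).sub
      ((hcompJ _ hfxy).mul hQhC)).div hfxJ hneJF1
  have hbvC : ContinuousOn bv J := by
    rw [hbvd]
    exact ((((((hcompJ _ hby').mul hfxJ).add ((hbJ.sub continuousOn_const).mul
      (hcompJ _ hfxy))).mul hQhC).add (((hbJ.sub continuousOn_const).mul hfxJ).mul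
      hQyhC)).add (hcompJ _ hfxy)).neg.div hfxJ hneJF1
  -- the vertical ODE: pdy σ₂ vanishes
  have hODEv : ∀ s ∈ J, HasDerivAt (fun r => pdy σ₂ (x₀, r)) (bv s * pdy σ₂ (x₀, s)) s := by
    intro s hs
    have hsl := slice_y_hasDerivAt hU hv' (p := (x₀, s)) ⟨hx₀, hs⟩
    rw [keyv s hs] at hsl
    exact hsl
  have hv0J : ∀ s ∈ J, pdy σ₂ (x₀, s) = 0 := ode_zero hJ hJc.convex hbvC hODEv hy₀ j5
  have hv0 : ∀ p ∈ I ×ˢ J, pdy σ₂ p = 0 := fun p hp =>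
    (hvyi p.1 hp.1 p.2 hp.2).trans (hv0J p.2 hp.2)
  -- the gradient of τ₁ vanishes
  have hQ0 : ∀ p ∈ I ×ˢ J, pdy τ₁ p = 0 := by
    intro p hp
    have h4 := (heq p hp).2.2.2
    rw [hu0 p hp, hv0 p hp] at h4
    have h : (b p - 1) * pdx f p * pdy τ₁ p = 0 := by linear_combination h4
    exact (mul_eq_zero.mp h).resolve_left
      (mul_ne_zero (sub_ne_zero.mpr (hb1 p hp)) (hfx p hp))
  have hP0 : ∀ p ∈ I ×ˢ J, pdx τ₁ p = 0 := by
    intro p hp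
    have h3 := (heq p hp).2.2.1
    rw [hQ0 p hp] at h3
    have h : pdy f p * pdx τ₁ p = 0 := by linear_combination h3
    exact (mul_eq_zero.mp h).resolve_left (hfy p hp)
  -- functions with vanishing gradient are constant on the product
  have hconst : ∀ (g : ℝ × ℝ → ℝ), ContDiffOn ℝ (⊤:ℕ∞) g (I ×ˢ J) →
      (∀ p ∈ I ×ˢ J, pdx g p = 0) → (∀ p ∈ I ×ˢ J, pdy g p = 0) →
      ∀ p ∈ I ×ˢ J, g p = g (x₀, y₀) := by
    intro g hg hgx hgy p hp
    have h1v : g p = g (p.1, y₀) := by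
      refine const_of_hasDerivAt_zero hJ hJc.convex (h := fun t => g (p.1, t)) ?_ hp.2 hy₀
      intro t ht
      have hs := slice_y_hasDerivAt hU hg (p := (p.1, t)) ⟨hp.1, ht⟩
      rw [hgy (p.1, t) ⟨hp.1, ht⟩] at hs
      exact hs
    have h2v : g (p.1, y₀) = g (x₀, y₀) := by
      refine const_of_hasDerivAt_zero hI hIc.convex (h := fun t => g (t, y₀)) ?_ hp.1 hx₀
      intro t ht
      have hs := slice_x_hasDerivAt hU hg (p := (t, y₀)) ⟨ht, hy₀⟩
      rw [hgx (t, y₀) ⟨ht, hy₀⟩] at hs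
      exact hs
    exact h1v.trans h2v
  intro p hp
  exact ⟨by rw [hconst σ₁ h₁ hu0 h1y p hp, j1],
    by rw [hconst σ₂ h₂ h2x hv0 p hp, j2],
    by rw [hconst τ₁ h₃ hP0 hQ0 p hp, j3]⟩

lemma samuelson_main
    (I J : Set ℝ) (hI : IsOpen I) (hJ : IsOpen J)
    (hIc : I.OrdConnected) (hJc : J.OrdConnected)
    (f : ℝ × ℝ → ℝ) (hf : ContDiffOn ℝ (⊤ : ℕ∞) f (I ×ˢ J))
    (hfx : ∀ p ∈ I ×ˢ J, pdx f p ≠ 0) (hfy : ∀ p ∈ I ×ˢ J, pdy f p ≠ 0)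
    (b : ℝ × ℝ → ℝ) (hb : ContDiffOn ℝ (⊤ : ℕ∞) b (I ×ˢ J))
    (hb0 : ∀ p ∈ I ×ˢ J, b p ≠ 0) (hb1 : ∀ p ∈ I ×ˢ J, b p ≠ 1)
    {x₀ y₀ : ℝ} (hx₀ : x₀ ∈ I) (hy₀ : y₀ ∈ J) :
    ∃ S : Submodule ℝ (((I ×ˢ J : Set (ℝ × ℝ)) → ℝ) × ((I ×ˢ J : Set (ℝ × ℝ)) → ℝ)
        × ((I ×ˢ J : Set (ℝ × ℝ)) → ℝ)),
      FiniteDimensional ℝ S ∧ Module.finrank ℝ S ≤ 6 ∧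
      (∀ σ₁ σ₂ τ₁ : ℝ × ℝ → ℝ,
        ContDiffOn ℝ (⊤ : ℕ∞) σ₁ (I ×ˢ J) → ContDiffOn ℝ (⊤ : ℕ∞) σ₂ (I ×ˢ J) →
        ContDiffOn ℝ (⊤ : ℕ∞) τ₁ (I ×ˢ J) →
        (∀ p ∈ I ×ˢ J,
          pdx f p * pdy σ₁ p = 0 ∧
          pdy f p * pdx σ₂ p = 0 ∧
          pdy f p * pdx τ₁ p - pdx f p * pdy τ₁ p = 0 ∧
          b p * pdy f p * pdx σ₁ p + (b p - 1) * pdx f p * pdy τ₁ p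
            + pdx f p * pdy σ₂ p = 0) →
        (fun u : (I ×ˢ J : Set (ℝ × ℝ)) => σ₁ u,
         fun u : (I ×ˢ J : Set (ℝ × ℝ)) => σ₂ u,
         fun u : (I ×ˢ J : Set (ℝ × ℝ)) => τ₁ u) ∈ S) ∧
      (∀ σ₁ σ₂ τ₁ σ₁' σ₂' τ₁' : ℝ × ℝ → ℝ,
        ContDiffOn ℝ (⊤ : ℕ∞) σ₁ (I ×ˢ J) → ContDiffOn ℝ (⊤ : ℕ∞) σ₂ (I ×ˢ J) →
        ContDiffOn ℝ (⊤ : ℕ∞) τ₁ (I ×ˢ J) →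
        ContDiffOn ℝ (⊤ : ℕ∞) σ₁' (I ×ˢ J) → ContDiffOn ℝ (⊤ : ℕ∞) σ₂' (I ×ˢ J) →
        ContDiffOn ℝ (⊤ : ℕ∞) τ₁' (I ×ˢ J) →
        (∀ p ∈ I ×ˢ J,
          pdx f p * pdy σ₁ p + pdy (pdx f) p = 0 ∧
          pdy f p * pdx σ₂ p + pdy (pdx f) p = 0 ∧
          pdy f p * pdx τ₁ p - pdx f p * pdy τ₁ p = 0 ∧
          b p * pdy f p * pdx σ₁ p + (b p - 1) * pdx f p * pdy τ₁ p
            + pdx f p * pdy σ₂ p + 2 * b p * pdy (pdx f) p + pdx b p * pdy f p = 0) →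
        (∀ p ∈ I ×ˢ J,
          pdx f p * pdy σ₁' p + pdy (pdx f) p = 0 ∧
          pdy f p * pdx σ₂' p + pdy (pdx f) p = 0 ∧
          pdy f p * pdx τ₁' p - pdx f p * pdy τ₁' p = 0 ∧
          b p * pdy f p * pdx σ₁' p + (b p - 1) * pdx f p * pdy τ₁' p
            + pdx f p * pdy σ₂' p + 2 * b p * pdy (pdx f) p + pdx b p * pdy f p = 0) →
        (fun u : (I ×ˢ J : Set (ℝ × ℝ)) => σ₁ u - σ₁' u,
         fun u : (I ×ˢ J : Set (ℝ × ℝ)) => σ₂ u - σ₂' u,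
         fun u : (I ×ˢ J : Set (ℝ × ℝ)) => τ₁ u - τ₁' u) ∈ S) := by
  classical
  have hU : IsOpen (I ×ˢ J) := hI.prod hJ
  have hp₀ : ((x₀, y₀) : ℝ × ℝ) ∈ I ×ˢ J := ⟨hx₀, hy₀⟩
  let res : (ℝ × ℝ → ℝ) → ((I ×ˢ J : Set (ℝ × ℝ)) → ℝ) := fun g u => g u
  let Good : (ℝ × ℝ → ℝ) → (ℝ × ℝ → ℝ) → (ℝ × ℝ → ℝ) → Prop := fun σ₁ σ₂ τ₁ =>
    ContDiffOn ℝ (⊤ : ℕ∞) σ₁ (I ×ˢ J) ∧ ContDiffOn ℝ (⊤ : ℕ∞) σ₂ (I ×ˢ J) ∧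
    ContDiffOn ℝ (⊤ : ℕ∞) τ₁ (I ×ˢ J) ∧
    ∀ p ∈ I ×ˢ J,
      pdx f p * pdy σ₁ p = 0 ∧ pdy f p * pdx σ₂ p = 0 ∧
      pdy f p * pdx τ₁ p - pdx f p * pdy τ₁ p = 0 ∧
      b p * pdy f p * pdx σ₁ p + (b p - 1) * pdx f p * pdy τ₁ p + pdx f p * pdy σ₂ p = 0
  have zeroGood : Good (fun _ => 0) (fun _ => 0) (fun _ => 0) := by
    refine ⟨contDiffOn_const, contDiffOn_const, contDiffOn_const, ?_⟩
    intro p hp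
    refine ⟨?_, ?_, ?_, ?_⟩ <;> simp [pdx, pdy]
  have addGood : ∀ {a1 a2 a3 c1 c2 c3 : ℝ × ℝ → ℝ}, Good a1 a2 a3 → Good c1 c2 c3 →
      Good (fun q => a1 q + c1 q) (fun q => a2 q + c2 q) (fun q => a3 q + c3 q) := by
    intro a1 a2 a3 c1 c2 c3 ha hc
    refine ⟨ha.1.add hc.1, ha.2.1.add hc.2.1, ha.2.2.1.add hc.2.2.1, ?_⟩
    intro p hp
    have A := ha.2.2.2 p hp
    have C := hc.2.2.2 p hp
    refine ⟨?_, ?_, ?_, ?_⟩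
    · rw [pdy_add hU ha.1 hc.1 hp]; linear_combination A.1 + C.1
    · rw [pdx_add hU ha.2.1 hc.2.1 hp]; linear_combination A.2.1 + C.2.1
    · rw [pdx_add hU ha.2.2.1 hc.2.2.1 hp, pdy_add hU ha.2.2.1 hc.2.2.1 hp]
      linear_combination A.2.2.1 + C.2.2.1
    · rw [pdx_add hU ha.1 hc.1 hp, pdy_add hU ha.2.2.1 hc.2.2.1 hp,
        pdy_add hU ha.2.1 hc.2.1 hp]
      linear_combination A.2.2.2 + C.2.2.2
  have smulGood : ∀ (r : ℝ) {a1 a2 a3 : ℝ × ℝ → ℝ}, Good a1 a2 a3 →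
      Good (fun q => r * a1 q) (fun q => r * a2 q) (fun q => r * a3 q) := by
    intro r a1 a2 a3 ha
    refine ⟨contDiffOn_const.mul ha.1, contDiffOn_const.mul ha.2.1,
      contDiffOn_const.mul ha.2.2.1, ?_⟩
    intro p hp
    have A := ha.2.2.2 p hp
    refine ⟨?_, ?_, ?_, ?_⟩
    · rw [pdy_const_mul hU ha.1 r hp]; linear_combination r * A.1
    · rw [pdx_const_mul hU ha.2.1 r hp]; linear_combination r * A.2.1
    · rw [pdx_const_mul hU ha.2.2.1 r hp, pdy_const_mul hU ha.2.2.1 r hp]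
      linear_combination r * A.2.2.1
    · rw [pdx_const_mul hU ha.1 r hp, pdy_const_mul hU ha.2.2.1 r hp,
        pdy_const_mul hU ha.2.1 r hp]
      linear_combination r * A.2.2.2
  let S : Submodule ℝ (((I ×ˢ J : Set (ℝ × ℝ)) → ℝ) × ((I ×ˢ J : Set (ℝ × ℝ)) → ℝ)
      × ((I ×ˢ J : Set (ℝ × ℝ)) → ℝ)) :=
    { carrier := { w | ∃ g : (ℝ × ℝ → ℝ) × (ℝ × ℝ → ℝ) × (ℝ × ℝ → ℝ),
        Good g.1 g.2.1 g.2.2 ∧ w = (res g.1, res g.2.1, res g.2.2) }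
      zero_mem' := ⟨(fun _ => 0, fun _ => 0, fun _ => 0), zeroGood, rfl⟩
      add_mem' := by
        rintro w w' ⟨ga, hga, rfl⟩ ⟨gc, hgc, rfl⟩
        exact ⟨(fun q => ga.1 q + gc.1 q, fun q => ga.2.1 q + gc.2.1 q,
          fun q => ga.2.2 q + gc.2.2 q), addGood hga hgc, rfl⟩
      smul_mem' := by
        rintro r w ⟨ga, hga, rfl⟩
        exact ⟨(fun q => r * ga.1 q, fun q => r * ga.2.1 q, fun q => r * ga.2.2 q),
          smulGood r hga, rfl⟩ }
  have hrep : ∀ s : ↥S, ∃ g : (ℝ × ℝ → ℝ) × (ℝ × ℝ → ℝ) × (ℝ × ℝ → ℝ),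
      Good g.1 g.2.1 g.2.2 ∧ (↑s : _) = (res g.1, res g.2.1, res g.2.2) := fun s => s.2
  let jet : (ℝ × ℝ → ℝ) × (ℝ × ℝ → ℝ) × (ℝ × ℝ → ℝ) → ℝ × ℝ × ℝ × ℝ × ℝ × ℝ := fun g =>
    (g.1 (x₀, y₀), g.2.1 (x₀, y₀), g.2.2 (x₀, y₀), pdx g.1 (x₀, y₀),
      pdy g.2.1 (x₀, y₀), pdy (pdy g.2.1) (x₀, y₀))
  let F : ↥S → ℝ × ℝ × ℝ × ℝ × ℝ × ℝ := fun s => jet (Exists.choose (hrep s))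
  have hFspec : ∀ (s : ↥S) (g : (ℝ × ℝ → ℝ) × (ℝ × ℝ → ℝ) × (ℝ × ℝ → ℝ)),
      Good g.1 g.2.1 g.2.2 → (↑s : _) = (res g.1, res g.2.1, res g.2.2) → F s = jet g := by
    intro s g hg hres
    obtain ⟨hgood, hr⟩ := Exists.choose_spec (hrep s)
    set gc := Exists.choose (hrep s) with hgc
    have hrr := hr.symm.trans hres
    have h1 : ∀ q ∈ I ×ˢ J, gc.1 q = g.1 q := fun q hq =>
      congrFun (congrArg Prod.fst hrr) ⟨q, hq⟩
    have h2 : ∀ q ∈ I ×ˢ J, gc.2.1 q = g.2.1 q := fun q hq =>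
      congrFun (congrArg (fun w => w.2.1) hrr) ⟨q, hq⟩
    have h3 : ∀ q ∈ I ×ˢ J, gc.2.2 q = g.2.2 q := fun q hq =>
      congrFun (congrArg (fun w => w.2.2) hrr) ⟨q, hq⟩
    show (gc.1 (x₀, y₀), gc.2.1 (x₀, y₀), gc.2.2 (x₀, y₀), pdx gc.1 (x₀, y₀),
      pdy gc.2.1 (x₀, y₀), pdy (pdy gc.2.1) (x₀, y₀)) = (g.1 (x₀, y₀), g.2.1 (x₀, y₀),
      g.2.2 (x₀, y₀), pdx g.1 (x₀, y₀), pdy g.2.1 (x₀, y₀), pdy (pdy g.2.1) (x₀, y₀))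
    rw [h1 _ hp₀, h2 _ hp₀, h3 _ hp₀, pdx_congrOn hU h1 hp₀, pdy_congrOn hU h2 hp₀,
      pdy_pdy_congrOn hU h2 hp₀]
  have hFadd : ∀ s t : ↥S, F (s + t) = F s + F t := by
    intro s t
    obtain ⟨ga, hga, hra⟩ := hrep s
    obtain ⟨gc, hgc, hrc⟩ := hrep t
    have hsum : (↑(s + t) : _) = (res (fun q => ga.1 q + gc.1 q),
        res (fun q => ga.2.1 q + gc.2.1 q), res (fun q => ga.2.2 q + gc.2.2 q)) := by
      rw [Submodule.coe_add, hra, hrc]; rfl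
    rw [hFspec (s + t) (fun q => ga.1 q + gc.1 q, fun q => ga.2.1 q + gc.2.1 q,
        fun q => ga.2.2 q + gc.2.2 q) (addGood hga hgc) hsum,
      hFspec s ga hga hra, hFspec t gc hgc hrc]
    show ((fun q => ga.1 q + gc.1 q) (x₀, y₀), (fun q => ga.2.1 q + gc.2.1 q) (x₀, y₀),
      (fun q => ga.2.2 q + gc.2.2 q) (x₀, y₀), pdx (fun q => ga.1 q + gc.1 q) (x₀, y₀),
      pdy (fun q => ga.2.1 q + gc.2.1 q) (x₀, y₀),
      pdy (pdy (fun q => ga.2.1 q + gc.2.1 q)) (x₀, y₀)) = _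
    rw [pdx_add hU hga.1 hgc.1 hp₀, pdy_add hU hga.2.1 hgc.2.1 hp₀,
      pdy_pdy_add hU hga.2.1 hgc.2.1 hp₀]
    rfl
  have hFsmul : ∀ (r : ℝ) (s : ↥S), F (r • s) = r • F s := by
    intro r s
    obtain ⟨ga, hga, hra⟩ := hrep s
    have hsm : (↑(r • s) : _) = (res (fun q => r * ga.1 q),
        res (fun q => r * ga.2.1 q), res (fun q => r * ga.2.2 q)) := by
      rw [Submodule.coe_smul, hra]; rfl
    rw [hFspec (r • s) (fun q => r * ga.1 q, fun q => r * ga.2.1 q,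
        fun q => r * ga.2.2 q) (smulGood r hga) hsm, hFspec s ga hga hra]
    show ((fun q => r * ga.1 q) (x₀, y₀), (fun q => r * ga.2.1 q) (x₀, y₀),
      (fun q => r * ga.2.2 q) (x₀, y₀), pdx (fun q => r * ga.1 q) (x₀, y₀),
      pdy (fun q => r * ga.2.1 q) (x₀, y₀),
      pdy (pdy (fun q => r * ga.2.1 q)) (x₀, y₀)) = _
    rw [pdx_const_mul hU hga.1 r hp₀, pdy_const_mul hU hga.2.1 r hp₀,
      pdy_pdy_const_mul hU hga.2.1 r hp₀]
    rfl
  let φ : ↥S →ₗ[ℝ] ℝ × ℝ × ℝ × ℝ × ℝ × ℝ := IsLinearMap.mk' F ⟨hFadd, hFsmul⟩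
  have hker : ∀ s : ↥S, φ s = 0 → s = 0 := by
    intro s hs
    obtain ⟨g, hg, hr⟩ := hrep s
    have hjet : (g.1 (x₀, y₀), g.2.1 (x₀, y₀), g.2.2 (x₀, y₀), pdx g.1 (x₀, y₀),
        pdy g.2.1 (x₀, y₀), pdy (pdy g.2.1) (x₀, y₀))
        = ((0:ℝ), (0:ℝ), (0:ℝ), (0:ℝ), (0:ℝ), (0:ℝ)) := by
      have h0 : F s = ((0:ℝ), (0:ℝ), (0:ℝ), (0:ℝ), (0:ℝ), (0:ℝ)) := hs
      exact (hFspec s g hg hr).symm.trans h0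
    simp only [Prod.mk.injEq] at hjet
    obtain ⟨z1, z2, z3, z4, z5, z6⟩ := hjet
    have hz := samuelson_unique I J hI hJ hIc hJc f hf hfx hfy b hb hb0 hb1 hx₀ hy₀
      g.1 g.2.1 g.2.2 hg.1 hg.2.1 hg.2.2.1 hg.2.2.2 z1 z2 z3 z4 z5 z6
    apply Subtype.ext
    rw [hr]
    have r1 : res g.1 = 0 := funext fun u => (hz u u.2).1
    have r2 : res g.2.1 = 0 := funext fun u => (hz u u.2).2.1
    have r3 : res g.2.2 = 0 := funext fun u => (hz u u.2).2.2
    rw [r1, r2, r3]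
    rfl
  have hinj : Function.Injective φ := LinearMap.ker_eq_bot.mp (LinearMap.ker_eq_bot'.mpr hker)
  haveI hfd : FiniteDimensional ℝ ↥S := FiniteDimensional.of_injective φ hinj
  refine ⟨S, hfd, ?_, ?_, ?_⟩
  · have hle := LinearMap.finrank_le_finrank_of_injective hinj
    have : Module.finrank ℝ (ℝ × ℝ × ℝ × ℝ × ℝ × ℝ) = 6 := by simp [Module.finrank_prod]
    omega
  · intro σ₁ σ₂ τ₁ h1 h2 h3 hsys
    exact ⟨(σ₁, σ₂, τ₁), ⟨h1, h2, h3, hsys⟩, rfl⟩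
  · intro σ₁ σ₂ τ₁ σ₁' σ₂' τ₁' h1 h2 h3 h1' h2' h3' hsys hsys'
    refine ⟨(fun q => σ₁ q - σ₁' q, fun q => σ₂ q - σ₂' q, fun q => τ₁ q - τ₁' q),
      ⟨h1.sub h1', h2.sub h2', h3.sub h3', ?_⟩, rfl⟩
    intro p hp
    have A := hsys p hp
    have B := hsys' p hp
    refine ⟨?_, ?_, ?_, ?_⟩
    · rw [pdy_sub hU h1 h1' hp]; linear_combination A.1 - B.1
    · rw [pdx_sub hU h2 h2' hp]; linear_combination A.2.1 - B.2.1
    · rw [pdx_sub hU h3 h3' hp, pdy_sub hU h3 h3' hp]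
      linear_combination A.2.2.1 - B.2.2.1
    · rw [pdx_sub hU h1 h1' hp, pdy_sub hU h3 h3' hp, pdy_sub hU h2 h2' hp]
      linear_combination A.2.2.2 - B.2.2.2

/-- (Theorem 1: the rank of a Samuelson web does not exceed 6.)
For the Samuelson system (E1)–(E4) in cleared coordinate form, the solutions of
the associated homogeneous system form (after restriction to `U`) a real vector
space of dimension at most `6`; consequently differences of any two solutions of
the inhomogeneous system (E1)–(E4) also lie in this space, so the solution set,
if nonempty, is an affine subspace of dimension at most `6`. -/
theorem samuelson_rank_le_six
    (I J : Set ℝ) (hI : IsOpen I) (hJ : IsOpen J)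
    (hIc : I.OrdConnected) (hJc : J.OrdConnected)
    (f : ℝ × ℝ → ℝ) (hf : ContDiffOn ℝ (⊤ : ℕ∞) f (I ×ˢ J))
    (hfx : ∀ p ∈ I ×ˢ J, pdx f p ≠ 0) (hfy : ∀ p ∈ I ×ˢ J, pdy f p ≠ 0)
    (b : ℝ × ℝ → ℝ) (hb : ContDiffOn ℝ (⊤ : ℕ∞) b (I ×ˢ J))
    (hb0 : ∀ p ∈ I ×ˢ J, b p ≠ 0) (hb1 : ∀ p ∈ I ×ˢ J, b p ≠ 1) :
    ∃ S : Submodule ℝ (((I ×ˢ J : Set (ℝ × ℝ)) → ℝ) × ((I ×ˢ J : Set (ℝ × ℝ)) → ℝ)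
        × ((I ×ˢ J : Set (ℝ × ℝ)) → ℝ)),
      FiniteDimensional ℝ S ∧ Module.finrank ℝ S ≤ 6 ∧
      (∀ σ₁ σ₂ τ₁ : ℝ × ℝ → ℝ,
        ContDiffOn ℝ (⊤ : ℕ∞) σ₁ (I ×ˢ J) → ContDiffOn ℝ (⊤ : ℕ∞) σ₂ (I ×ˢ J) →
        ContDiffOn ℝ (⊤ : ℕ∞) τ₁ (I ×ˢ J) →
        (∀ p ∈ I ×ˢ J,
          pdx f p * pdy σ₁ p = 0 ∧
          pdy f p * pdx σ₂ p = 0 ∧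
          pdy f p * pdx τ₁ p - pdx f p * pdy τ₁ p = 0 ∧
          b p * pdy f p * pdx σ₁ p + (b p - 1) * pdx f p * pdy τ₁ p
            + pdx f p * pdy σ₂ p = 0) →
        (fun u : (I ×ˢ J : Set (ℝ × ℝ)) => σ₁ u,
         fun u : (I ×ˢ J : Set (ℝ × ℝ)) => σ₂ u,
         fun u : (I ×ˢ J : Set (ℝ × ℝ)) => τ₁ u) ∈ S) ∧
      (∀ σ₁ σ₂ τ₁ σ₁' σ₂' τ₁' : ℝ × ℝ → ℝ,
        ContDiffOn ℝ (⊤ : ℕ∞) σ₁ (I ×ˢ J) → ContDiffOn ℝ (⊤ : ℕ∞) σ₂ (I ×ˢ J) →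
        ContDiffOn ℝ (⊤ : ℕ∞) τ₁ (I ×ˢ J) →
        ContDiffOn ℝ (⊤ : ℕ∞) σ₁' (I ×ˢ J) → ContDiffOn ℝ (⊤ : ℕ∞) σ₂' (I ×ˢ J) →
        ContDiffOn ℝ (⊤ : ℕ∞) τ₁' (I ×ˢ J) →
        (∀ p ∈ I ×ˢ J,
          pdx f p * pdy σ₁ p + pdy (pdx f) p = 0 ∧
          pdy f p * pdx σ₂ p + pdy (pdx f) p = 0 ∧
          pdy f p * pdx τ₁ p - pdx f p * pdy τ₁ p = 0 ∧
          b p * pdy f p * pdx σ₁ p + (b p - 1) * pdx f p * pdy τ₁ p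
            + pdx f p * pdy σ₂ p + 2 * b p * pdy (pdx f) p + pdx b p * pdy f p = 0) →
        (∀ p ∈ I ×ˢ J,
          pdx f p * pdy σ₁' p + pdy (pdx f) p = 0 ∧
          pdy f p * pdx σ₂' p + pdy (pdx f) p = 0 ∧
          pdy f p * pdx τ₁' p - pdx f p * pdy τ₁' p = 0 ∧
          b p * pdy f p * pdx σ₁' p + (b p - 1) * pdx f p * pdy τ₁' p
            + pdx f p * pdy σ₂' p + 2 * b p * pdy (pdx f) p + pdx b p * pdy f p = 0) →
        (fun u : (I ×ˢ J : Set (ℝ × ℝ)) => σ₁ u - σ₁' u,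
         fun u : (I ×ˢ J : Set (ℝ × ℝ)) => σ₂ u - σ₂' u,
         fun u : (I ×ˢ J : Set (ℝ × ℝ)) => τ₁ u - τ₁' u) ∈ S) := by
  
  classical
  by_cases hne : (I ×ˢ J).Nonempty
  · obtain ⟨⟨x₀, y₀⟩, hp₀⟩ := hne
    exact samuelson_main I J hI hJ hIc hJc f hf hfx hfy b hb hb0 hb1 hp₀.1 hp₀.2
  · have hz : ∀ g : ℝ × ℝ → ℝ,
        (fun u : (I ×ˢ J : Set (ℝ × ℝ)) => g u) = (0 : (I ×ˢ J : Set (ℝ × ℝ)) → ℝ) :=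
      fun g => funext fun u => absurd ⟨(u : ℝ × ℝ), u.2⟩ hne
    refine ⟨⊥, inferInstance, by simp, ?_, ?_⟩
    · intro σ₁ σ₂ τ₁ _ _ _ _
      rw [hz σ₁, hz σ₂, hz τ₁]
      exact Submodule.zero_mem ⊥
    · intro σ₁ σ₂ τ₁ σ₁' σ₂' τ₁' _ _ _ _ _ _ _ _
      have hz2 : ∀ g g' : ℝ × ℝ → ℝ,
          (fun u : (I ×ˢ J : Set (ℝ × ℝ)) => g u - g' u)
            = (0 : (I ×ˢ J : Set (ℝ × ℝ)) → ℝ) :=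
        fun g g' => funext fun u => absurd ⟨(u : ℝ × ℝ), u.2⟩ hne
      rw [hz2 σ₁ σ₁', hz2 σ₂ σ₂', hz2 τ₁ τ₁']
      exact Submodule.zero_mem ⊥
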